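/- Let r, s, and n be integers with s ≠ 0, and let b be a positive integer. Then δ_b(r, s, −n/b) = −δ_b(r−s, −s, n/b). -/

import Mathlib

open Polynomial
open scoped Classical

noncomputable section

/-- The generalized Dwork map `D_b(α)`: the unique rational whose reduced denominator is
coprime to `b` and such that `b·D_b(α) − α ∈ {0, 1, …, b−1}`. -/
def dwork (b : ℕ) (α : ℚ) : ℚ :=
  if h : ∃ θ : ℚ, Nat.Coprime θ.den b ∧ ∃ k : ℤ, 0 ≤ k ∧ k < (b : ℤ) ∧ (b : ℚ) * θ - α = (k : ℚ)
  then h.choose else 0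

/-- `α ∈ ℤ_{≤0}`. -/
def IsNonPosInt (α : ℚ) : Prop := ∃ m : ℤ, m ≤ 0 ∧ α = (m : ℚ)

/-- `α ∈ ℤ_{>0}`. -/
def IsPosInt (α : ℚ) : Prop := ∃ m : ℤ, 0 < m ∧ α = (m : ℚ)

/-- `𝔫_α`. -/
def frakn (α : ℚ) : ℤ := if 0 ≤ α then α.num else |α.num| + 1

/-- `⟨x⟩`: the fractional part of `x` if `x ∉ ℤ`, and `1` if `x ∈ ℤ`. -/
def cangle (x : ℝ) : ℝ := if ∃ m : ℤ, x = (m : ℝ) then 1 else Int.fract x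

/-- Christol order `x ⪯ y`. -/
def cle (x y : ℝ) : Prop := cangle x < cangle y ∨ (cangle x = cangle y ∧ y ≤ x)

/-- The step function `δ_b(r, s, ·)`. -/
def qdelta (b : ℕ) (r s : ℤ) (x : ℝ) : ℤ :=
  if Int.gcd (s / (Nat.gcd (Int.gcd r s) b : ℤ)) (((b / Nat.gcd (Int.gcd r s) b : ℕ)) : ℤ) = 1 then
    ⌊(Nat.gcd (Int.gcd r s) b : ℝ) * x
        - ((dwork (b / Nat.gcd (Int.gcd r s) b) ((r : ℚ) / (s : ℚ)) : ℚ) : ℝ)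
        - ((⌊1 - (r : ℚ) / (s : ℚ)⌋ : ℤ) : ℝ) / ((b / Nat.gcd (Int.gcd r s) b : ℕ) : ℝ)⌋ + 1
  else 0

/-- The Landau-type step function `Δ_b^{𝐫,𝐭}`. -/
def qDeltaFn {v w : ℕ} (b : ℕ) (rr : Fin v → ℤ × ℤ) (tt : Fin w → ℤ × ℤ) (x : ℝ) : ℤ :=
  (∑ i, qdelta b (rr i).1 (rr i).2 x) - (∑ j, qdelta b (tt j).1 (tt j).2 x)

/-- The q-Pochhammer symbol `(q^r; q^s)_n` for `n ∈ ℕ`, inside `ℚ(q)`. -/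
def qPoch (r s : ℤ) (n : ℕ) : RatFunc ℚ :=
  ∏ i ∈ Finset.range n, (1 - RatFunc.X ^ (r + s * (i : ℤ)))

/-- The q-Pochhammer symbol `(q^r; q^s)_n` for `n ∈ ℤ`. -/
def qPochZ (r s : ℤ) (n : ℤ) : RatFunc ℚ :=
  if 0 ≤ n then qPoch r s n.toNat else (qPoch (r - s) (-s) (-n).toNat)⁻¹

/-- Multiplicity of `p` in `g`: the largest `k` with `p^k ∣ g`. -/
def polyMult (p g : Polynomial ℚ) : ℕ := sSup {k : ℕ | p ^ k ∣ g}

/-- The valuation `v_{φ_b}` on `ℚ(q)` attached to the `b`-th cyclotomic polynomial. -/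
def cycVal (b : ℕ) (f : RatFunc ℚ) : ℤ :=
  (polyMult (cyclotomic b ℚ) f.num : ℤ) - (polyMult (cyclotomic b ℚ) f.denom : ℤ)

/-- The image of an integer polynomial in `ℚ(q)`. -/
def polyZ (g : Polynomial ℤ) : RatFunc ℚ :=
  algebraMap (Polynomial ℚ) (RatFunc ℚ) (g.map (Int.castRingHom ℚ))

/-- `f ∈ ℤ[q⁻¹, q]`. -/
def IsIntLaurent (f : RatFunc ℚ) : Prop :=
  ∃ (m : ℕ) (g : Polynomial ℤ), f * RatFunc.X ^ m = polyZ g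

/-- `f ∈ ℤ[q]`. -/
def IsIntPoly (f : RatFunc ℚ) : Prop := ∃ g : Polynomial ℤ, f = polyZ g

/-- The ratio attached to a pair of integers. -/
def ratOf (p : ℤ × ℤ) : ℚ := (p.1 : ℚ) / (p.2 : ℚ)

/-- The q-hypergeometric term `Q_{𝐫,𝐭}(q; n)`, `n ∈ ℕ`. -/
def qHyp {v w : ℕ} (rr : Fin v → ℤ × ℤ) (tt : Fin w → ℤ × ℤ) (n : ℕ) : RatFunc ℚ :=
  (∏ i, qPoch (rr i).1 (rr i).2 n) / (∏ j, qPoch (tt j).1 (tt j).2 n)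

/-- The q-hypergeometric term `Q_{𝐫,𝐭}(q; n)`, `n ∈ ℤ`. -/
def qHypZ {v w : ℕ} (rr : Fin v → ℤ × ℤ) (tt : Fin w → ℤ × ℤ) (n : ℤ) : RatFunc ℚ :=
  (∏ i, qPochZ (rr i).1 (rr i).2 n) / (∏ j, qPochZ (tt j).1 (tt j).2 n)

/-- `c := gcd(r, s, b)`. -/
def cOf (p : ℤ × ℤ) (b : ℕ) : ℕ := Nat.gcd (Int.gcd p.1 p.2) b

/-- Membership in `V_b` (resp. `W_b`): `gcd(s, b) = gcd(r, s, b)`. -/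
def inV (p : ℤ × ℤ) (b : ℕ) : Prop := Nat.gcd p.2.natAbs b = cOf p b

/-- `d_{𝐫,𝐭}`: the lcm of all the `s_i` and `u_j`. -/
def dRT {v w : ℕ} (rr : Fin v → ℤ × ℤ) (tt : Fin w → ℤ × ℤ) : ℕ :=
  Nat.lcm (Finset.univ.lcm fun i => ((rr i).2).natAbs)
    (Finset.univ.lcm fun j => ((tt j).2).natAbs)

/-- `b̃`: the greatest divisor of `b` coprime to `d`. -/
def btilde (d b : ℕ) : ℕ := Nat.findGreatest (fun k => k ∣ b ∧ Nat.Coprime k d) b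

/-- The unique `a ∈ {1,…,d}` with `a·b̃ ≡ 1 (mod d)`. -/
def aOf (d b : ℕ) : ℕ :=
  if h : ∃ a, 1 ≤ a ∧ a ≤ d ∧ (a * btilde d b) % d = 1 % d then h.choose else 1

/-- The representative of `b` modulo `d` lying in `{1,…,d}`. -/
def repMod (d b : ℕ) : ℕ := if b % d = 0 then d else b % d

/-- The jump abscissa `(⟨e·α⟩ + k)/c − ⌊1 − a·α⌋`. -/
def jumpPt (p : ℤ × ℤ) (b : ℕ) (a ei : ℤ) (k : ℕ) : ℝ :=
  (cangle (((ei : ℚ) * ratOf p : ℚ) : ℝ) + (k : ℝ)) / (cOf p b : ℝ)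
    - ((⌊1 - (a : ℚ) * ratOf p⌋ : ℤ) : ℝ)

/-- Number of pairs `(i,k)` with jump abscissa `⪯ x` coming from one pair `p`. -/
def XiCount (p : ℤ × ℤ) (b : ℕ) (a ei : ℤ) (x : ℝ) : ℕ :=
  if inV p b then ((Finset.range (cOf p b)).filter fun k => cle (jumpPt p b a ei k) x).card else 0

/-- The generalized Christol step function `Ξ_{𝐫,𝐭}(b, ·)`, relative to choices `e`, `f`. -/
def Xi {v w : ℕ} (rr : Fin v → ℤ × ℤ) (tt : Fin w → ℤ × ℤ) (b : ℕ)
    (e : Fin v → ℤ) (f : Fin w → ℤ) (x : ℝ) : ℤ :=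
  (∑ i, (XiCount (rr i) b ((aOf (dRT rr tt) b : ℕ) : ℤ) (e i) x : ℤ))
    - (∑ j, (XiCount (tt j) b ((aOf (dRT rr tt) b : ℕ) : ℤ) (f j) x : ℤ))

/-- `ei` is an admissible choice for the pair `p` and `b`: positive with `b·ei ≡ c (mod s)`. -/
def goodChoice (p : ℤ × ℤ) (b : ℕ) (ei : ℤ) : Prop :=
  inV p b → 0 < ei ∧ p.2 ∣ ((b : ℤ) * ei - (cOf p b : ℤ))

end

section AuxForQdeltaNeg

private lemma den_div_int_dvd (a b : ℤ) : ((((a : ℚ) / (b : ℚ)).den : ℤ)) ∣ b := by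
  rw [← Rat.divInt_eq_div]; exact Rat.den_dvd a b

private lemma den_div_nat_dvd (a : ℤ) (b : ℕ) : (((a : ℚ) / (b : ℚ)).den) ∣ b := by
  have h := den_div_int_dvd a (b : ℤ)
  rw [Int.cast_natCast] at h
  exact_mod_cast h

private lemma den_eq_one_of_mul (b : ℕ) (hb : 0 < b) (q : ℚ) (z : ℤ)
    (h : (b : ℚ) * q = (z : ℚ)) (hcop : Nat.Coprime q.den b) : q.den = 1 := by
  have hbq : (b : ℚ) ≠ 0 := by positivity
  have hq : q = (z : ℚ) / (b : ℚ) := by field_simp; linarith [h]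
  have hd : q.den ∣ b := by rw [hq]; exact den_div_nat_dvd z b
  exact Nat.Coprime.eq_one_of_dvd hcop hd

private lemma dwork_eq_of (b : ℕ) (hb : 0 < b) (α θ : ℚ)
    (h1 : Nat.Coprime θ.den b)
    (h2 : ∃ k : ℤ, 0 ≤ k ∧ k < (b : ℤ) ∧ (b : ℚ) * θ - α = (k : ℚ)) :
    dwork b α = θ := by
  have hex : ∃ θ : ℚ, Nat.Coprime θ.den b ∧
      ∃ k : ℤ, 0 ≤ k ∧ k < (b : ℤ) ∧ (b : ℚ) * θ - α = (k : ℚ) := ⟨θ, h1, h2⟩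
  rw [dwork, dif_pos hex]
  obtain ⟨hc1, k1, hk10, hk1b, he1⟩ := hex.choose_spec
  obtain ⟨k2, hk20, hk2b, he2⟩ := h2
  set θ1 := hex.choose with hθ1
  have hbq : (b : ℚ) ≠ 0 := by positivity
  have hdiff : θ1 - θ = ((k1 - k2 : ℤ) : ℚ) / (b : ℚ) := by
    field_simp; push_cast; linarith [he1, he2]
  have hd1 : (θ1 - θ).den ∣ b := by
    have h := den_div_int_dvd (k1 - k2) (b : ℤ)
    rw [Int.cast_natCast] at h
    rw [hdiff]; exact_mod_cast h
  have hcop : Nat.Coprime (θ1 - θ).den b := by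
    have hdvd : (θ1 - θ).den ∣ θ1.den * θ.den := by
      rw [sub_eq_add_neg]
      have h := Rat.add_den_dvd θ1 (-θ)
      rwa [Rat.den_neg_eq_den] at h
    exact Nat.Coprime.coprime_dvd_left hdvd (Nat.Coprime.mul hc1 h1)
  have hden : (θ1 - θ).den = 1 := Nat.Coprime.eq_one_of_dvd hcop hd1
  have ht : θ1 - θ = ((θ1 - θ).num : ℚ) := (Rat.coe_int_num_of_den_eq_one hden).symm
  set t : ℤ := (θ1 - θ).num with htdef
  have hbt : (b : ℤ) * t = k1 - k2 := by
    have : (b : ℚ) * (t : ℚ) = ((k1 - k2 : ℤ) : ℚ) := by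
      rw [← ht, hdiff]; field_simp
    exact_mod_cast this
  have hbZ : (0 : ℤ) < (b : ℤ) := by exact_mod_cast hb
  have ht0 : t = 0 := by
    rcases lt_trichotomy t 0 with h | h | h
    · nlinarith
    · exact h
    · nlinarith
  have hzero : θ1 - θ = 0 := by rw [ht, ht0]; norm_num
  linarith [hzero]

private lemma dwork_exists (b : ℕ) (hb : 0 < b) (α : ℚ) (h : Nat.Coprime α.den b) :
    ∃ θ : ℚ, Nat.Coprime θ.den b ∧
      ∃ k : ℤ, 0 ≤ k ∧ k < (b : ℤ) ∧ (b : ℚ) * θ - α = (k : ℚ) := by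
  have hbz : (b : ℤ) ≠ 0 := by exact_mod_cast hb.ne'
  have hbZ : (0 : ℤ) < (b : ℤ) := by exact_mod_cast hb
  have hbez : ((1 : ℕ) : ℤ) = (α.den : ℤ) * Nat.gcdA α.den b + (b : ℤ) * Nat.gcdB α.den b := by
    have hh := Nat.gcd_eq_gcd_ab α.den b
    rwa [h] at hh
  set a : ℤ := Nat.gcdA α.den b with ha
  set k : ℤ := (-α.num * a) % (b : ℤ) with hk
  have hk0 : 0 ≤ k := Int.emod_nonneg _ hbz
  have hkb : k < (b : ℤ) := Int.emod_lt_of_pos _ hbZ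
  have hkdef : k = -α.num * a - (b : ℤ) * ((-α.num * a) / (b : ℤ)) := by
    rw [hk, Int.emod_def]
  have hdvd : (b : ℤ) ∣ α.num + k * (α.den : ℤ) := by
    refine ⟨α.num * Nat.gcdB α.den b - ((-α.num * a) / (b : ℤ)) * (α.den : ℤ), ?_⟩
    push_cast at hbez
    linear_combination (α.den : ℤ) * hkdef + α.num * hbez
  obtain ⟨M, hM⟩ := hdvd
  refine ⟨(M : ℚ) / (α.den : ℚ), ?_, k, hk0, hkb, ?_⟩
  · exact Nat.Coprime.coprime_dvd_left (den_div_nat_dvd M α.den) h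
  · have hdq : ((α.den : ℚ)) ≠ 0 := by
      have := α.pos
      positivity
    have hMQ : (α.num : ℚ) + (k : ℚ) * (α.den : ℚ) = (b : ℚ) * (M : ℚ) := by
      exact_mod_cast hM
    have hnum : α * (α.den : ℚ) = (α.num : ℚ) := Rat.mul_den_eq_num α
    field_simp
    linear_combination -hMQ - hnum

private lemma neg_ediv_add_sub_one_ediv (m c : ℤ) (hc : 0 < c) :
    (-m) / c + (m - 1) / c = -1 := by
  have hcne : c ≠ 0 := hc.ne'
  have hq := Int.mul_ediv_add_emod m c
  set q := m / c with hqd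
  set rr := m % c with hrd
  have hr0 : 0 ≤ rr := Int.emod_nonneg m hcne
  have hrb : rr < c := Int.emod_lt_of_pos m hc
  have hm : m = c * q + rr := by linarith
  rcases eq_or_lt_of_le hr0 with h0 | hpos
  · have h1 : (-m) / c = -q := by
      rw [hm, ← h0, add_zero, show -(c * q) = c * (-q) by ring,
        Int.mul_ediv_cancel_left _ hcne]
    have h2 : (m - 1) / c = q - 1 := by
      rw [hm, ← h0, add_zero, show c * q - 1 = (c - 1) + c * (q - 1) by ring,
        Int.add_mul_ediv_left _ _ hcne,
        Int.ediv_eq_zero_of_lt (by omega) (by omega)]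
      omega
    omega
  · have h1 : (-m) / c = -q - 1 := by
      rw [hm, show -(c * q + rr) = (c - rr) + c * (-q - 1) by ring,
        Int.add_mul_ediv_left _ _ hcne,
        Int.ediv_eq_zero_of_lt (by omega) (by omega)]
      omega
    have h2 : (m - 1) / c = q := by
      rw [hm, show c * q + rr - 1 = (rr - 1) + c * q by ring,
        Int.add_mul_ediv_left _ _ hcne,
        Int.ediv_eq_zero_of_lt (by omega) (by omega)]
      omega
    omega

end AuxForQdeltaNeg

/-- Lemma 3.7: `δ_b(r, s, −n/b) = −δ_b(r−s, −s, n/b)`. -/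
theorem qdelta_neg (r s n : ℤ) (hs : s ≠ 0) (b : ℕ) (hb : 0 < b) :
    qdelta b r s (-(n : ℝ) / (b : ℝ)) = - qdelta b (r - s) (-s) ((n : ℝ) / (b : ℝ)) :=  by
  classical
  -- the gcds agree
  have hg : Int.gcd (r - s) (-s) = Int.gcd r s := by
    apply Nat.dvd_antisymm
    · rw [← Int.natCast_dvd_natCast]
      refine Int.dvd_coe_gcd ?_ ?_
      · have h1 : ((Int.gcd (r - s) (-s) : ℤ)) ∣ (r - s) := Int.gcd_dvd_left _ _
        have h2 : ((Int.gcd (r - s) (-s) : ℤ)) ∣ (-s) := Int.gcd_dvd_right _ _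
        have := dvd_sub h1 h2
        simpa using this
      · exact dvd_neg.mp (Int.gcd_dvd_right _ _)
    · rw [← Int.natCast_dvd_natCast]
      exact Int.dvd_coe_gcd (dvd_sub (Int.gcd_dvd_left _ _) (Int.gcd_dvd_right _ _))
        (dvd_neg.mpr (Int.gcd_dvd_right _ _))
  set c := Nat.gcd (Int.gcd r s) b with hcdef
  have hcpos : 0 < c := Nat.gcd_pos_of_pos_right _ hb
  have hcz : ((c : ℤ)) ≠ 0 := by exact_mod_cast hcpos.ne'
  have hcb : c ∣ b := Nat.gcd_dvd_right _ _
  set b' := b / c with hb'def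
  have hbb' : b = c * b' := (Nat.mul_div_cancel' hcb).symm
  have hb'pos : 0 < b' := Nat.div_pos (Nat.le_of_dvd hb hcb) hcpos
  have hcg : ((c : ℤ)) ∣ (Int.gcd r s : ℤ) :=
    Int.natCast_dvd_natCast.mpr (Nat.gcd_dvd_left _ _)
  have hcs : ((c : ℤ)) ∣ s := hcg.trans (Int.gcd_dvd_right _ _)
  have hneg : (-s) / (c : ℤ) = -(s / (c : ℤ)) := by
    obtain ⟨t, ht⟩ := hcs
    rw [ht, show -((c : ℤ) * t) = (c : ℤ) * (-t) by ring,
      Int.mul_ediv_cancel_left _ hcz, Int.mul_ediv_cancel_left _ hcz]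
  have hgcdneg : Int.gcd (-(s / (c : ℤ))) ((b' : ℕ) : ℤ) = Int.gcd (s / (c : ℤ)) ((b' : ℕ) : ℤ) := by
    rw [Int.gcd_def, Int.gcd_def, Int.natAbs_neg]
  rw [qdelta, qdelta, hg, ← hcdef, ← hb'def, hneg, hgcdneg]
  by_cases hcond : Int.gcd (s / (c : ℤ)) ((b' : ℕ) : ℤ) = 1
  swap
  · rw [if_neg hcond, if_neg hcond]; ring
  rw [if_pos hcond, if_pos hcond]
  -- the rational α and its transform
  set α : ℚ := (r : ℚ) / (s : ℚ) with hαdef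
  have hsq : ((s : ℚ)) ≠ 0 := by exact_mod_cast hs
  have hα' : ((r - s : ℤ) : ℚ) / ((-s : ℤ) : ℚ) = 1 - α := by
    have hsq2 : (-(s : ℚ)) ≠ 0 := neg_ne_zero.mpr hsq
    push_cast
    rw [hαdef]
    field_simp
    ring
  rw [hα', show (1 : ℚ) - (1 - α) = α by ring]
  -- coprimality of α.den with b'
  set g := Int.gcd r s with hgdef
  have hgpos : 0 < g := Int.gcd_pos_of_ne_zero_right r hs
  have hgz : ((g : ℤ)) ≠ 0 := by exact_mod_cast hgpos.ne'
  have hgr : ((g : ℤ)) ∣ r := Int.gcd_dvd_left _ _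
  have hgs : ((g : ℤ)) ∣ s := Int.gcd_dvd_right _ _
  obtain ⟨r₀, hr₀⟩ := hgr
  obtain ⟨s₀, hs₀⟩ := hgs
  have hα0 : α = (r₀ : ℚ) / (s₀ : ℚ) := by
    rw [hαdef, hr₀, hs₀]
    have hgq : ((g : ℕ) : ℚ) ≠ 0 := by exact_mod_cast hgpos.ne'
    push_cast
    rw [mul_div_mul_left _ _ hgq]
  have hs₀ne : s₀ ≠ 0 := by rintro rfl; simp at hs₀; exact hs hs₀
  have hdend : ((α.den : ℤ)) ∣ s / (c : ℤ) := by
    have h1 : ((α.den : ℤ)) ∣ s₀ := by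
      have := den_div_int_dvd r₀ s₀
      rwa [← hα0] at this
    have h2 : s / (c : ℤ) = s₀ * ((g : ℤ) / (c : ℤ)) := by
      obtain ⟨u, hu⟩ := hcg
      rw [hs₀, hu, show (c : ℤ) * u * s₀ = (c : ℤ) * (u * s₀) by ring,
        Int.mul_ediv_cancel_left _ hcz, Int.mul_ediv_cancel_left _ hcz]
      ring
    rw [h2]
    exact Dvd.dvd.mul_right h1 _
  have hcop0 : Nat.Coprime (s / (c : ℤ)).natAbs b' := by
    have := hcond
    rw [Int.gcd_def, Int.natAbs_natCast] at this
    exact this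
  have hαcop : Nat.Coprime α.den b' := by
    refine Nat.Coprime.coprime_dvd_left ?_ hcop0
    have := Int.natAbs_dvd_natAbs.mpr hdend
    simpa using this
  -- the dwork value D and its properties
  have hex := dwork_exists b' hb'pos α hαcop
  have hDspec : Nat.Coprime (dwork b' α).den b' ∧
      ∃ k : ℤ, 0 ≤ k ∧ k < (b' : ℤ) ∧ (b' : ℚ) * (dwork b' α) - α = (k : ℚ) := by
    rw [dwork, dif_pos hex]; exact hex.choose_spec
  obtain ⟨hDcop, k, hk0, hkb, hDk⟩ := hDspec
  set D := dwork b' α with hDdef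
  have hb'z : ((b' : ℤ)) ≠ 0 := by exact_mod_cast hb'pos.ne'
  have hb'q : ((b' : ℚ)) ≠ 0 := by positivity
  -- dwork of 1 - α
  have hD1cop : Nat.Coprime ((1 : ℚ) - D).den b' := by
    refine Nat.Coprime.coprime_dvd_left ?_ hDcop
    rw [sub_eq_add_neg]
    have h := Rat.add_den_dvd 1 (-D)
    rwa [Rat.den_neg_eq_den, Rat.den_ofNat, one_mul] at h
  have hdw1 : dwork b' (1 - α) = 1 - D := by
    apply dwork_eq_of b' hb'pos (1 - α) (1 - D) hD1cop
    refine ⟨(b' : ℤ) - 1 - k, by omega, by omega, ?_⟩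
    push_cast
    linarith [hDk]
  rw [hdw1]
  -- pass to rational floors
  set f₁ : ℤ := ⌊1 - α⌋ with hf₁def
  set f₂ : ℤ := ⌊α⌋ with hf₂def
  set X : ℚ := (-(n + f₁ : ℤ) : ℚ) / (b' : ℚ) - D with hXdef
  set Y : ℚ := ((n - f₂ : ℤ) : ℚ) / (b' : ℚ) + D - 1 with hYdef
  have hbq : ((b : ℚ)) ≠ 0 := by positivity
  have hbr : ((b : ℝ)) ≠ 0 := by positivity
  have hbb'Q : (b : ℚ) = (c : ℚ) * (b' : ℚ) := by exact_mod_cast congrArg (Nat.cast (R := ℚ)) hbb'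
  have harg1 : (c : ℝ) * (-(n : ℝ) / (b : ℝ)) - ((D : ℚ) : ℝ) - ((f₁ : ℤ) : ℝ) / ((b' : ℕ) : ℝ)
      = ((X : ℚ) : ℝ) := by
    rw [hXdef]
    have : ((b : ℝ)) = (c : ℝ) * (b' : ℝ) := by exact_mod_cast congrArg (Nat.cast (R := ℝ)) hbb'
    have hcr : ((c : ℝ)) ≠ 0 := by positivity
    have hb'r : ((b' : ℝ)) ≠ 0 := by positivity
    push_cast
    rw [this]
    field_simp
    ring
  have harg2 : (c : ℝ) * ((n : ℝ) / (b : ℝ)) - (((1 : ℚ) - D : ℚ) : ℝ) - ((f₂ : ℤ) : ℝ) / ((b' : ℕ) : ℝ)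
      = ((Y : ℚ) : ℝ) := by
    rw [hYdef]
    have : ((b : ℝ)) = (c : ℝ) * (b' : ℝ) := by exact_mod_cast congrArg (Nat.cast (R := ℝ)) hbb'
    have hcr : ((c : ℝ)) ≠ 0 := by positivity
    have hb'r : ((b' : ℝ)) ≠ 0 := by positivity
    push_cast
    rw [this]
    field_simp
    ring
  rw [harg1, harg2, Rat.floor_cast, Rat.floor_cast]
  -- now a statement about rational floors
  by_cases hden : α.den = 1
  · -- α is an integer
    have hαint : α = (α.num : ℚ) := (Rat.coe_int_num_of_den_eq_one hden).symm
    set a : ℤ := α.num with hadef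
    have hf1 : f₁ = 1 - a := by
      rw [hf₁def, hαint, show (1 : ℚ) - (a : ℚ) = ((1 - a : ℤ) : ℚ) by push_cast; ring,
        Int.floor_intCast]
    have hf2 : f₂ = a := by rw [hf₂def, hαint, Int.floor_intCast]
    have hDden : D.den = 1 := by
      apply den_eq_one_of_mul b' hb'pos D (a + k) ?_ hDcop
      push_cast
      rw [← hαint]
      linarith [hDk]
    have hDint : D = (D.num : ℚ) := (Rat.coe_int_num_of_den_eq_one hDden).symm
    set d : ℤ := D.num with hddef
    have hfX : ⌊X⌋ = (-(n + 1 - a)) / (b' : ℤ) - d := by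
      rw [hXdef, hDint, hf1,
        show (-(n + (1 - a) : ℤ) : ℚ) / (b' : ℚ) - (d : ℚ)
          = ((-(n + 1 - a) : ℤ) : ℚ) / ((b' : ℕ) : ℚ) - (d : ℚ) by push_cast; ring,
        Int.floor_sub_intCast, Rat.floor_intCast_div_natCast]
    have hfY : ⌊Y⌋ = ((n + 1 - a) - 1) / (b' : ℤ) + (d - 1) := by
      rw [hYdef, hDint, hf2,
        show ((n - a : ℤ) : ℚ) / (b' : ℚ) + (d : ℚ) - 1
          = (((n + 1 - a) - 1 : ℤ) : ℚ) / ((b' : ℕ) : ℚ) + ((d - 1 : ℤ) : ℚ) by push_cast; ring,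
        Int.floor_add_intCast, Rat.floor_intCast_div_natCast]
    rw [hfX, hfY]
    have hkey := neg_ediv_add_sub_one_ediv (n + 1 - a) (b' : ℤ) (by exact_mod_cast hb'pos)
    set u := (-(n + 1 - a)) / (b' : ℤ)
    set v := ((n + 1 - a) - 1) / (b' : ℤ)
    omega
  · -- α is not an integer
    have hDden : D.den ≠ 1 := by
      intro h
      apply hden
      have hDint : D = (D.num : ℚ) := (Rat.coe_int_num_of_den_eq_one h).symm
      have : α = (((b' : ℤ) * D.num - k : ℤ) : ℚ) := by
        push_cast
        rw [← hDint]
        linarith [hDk]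
      rw [this, Rat.den_intCast]
    have hf12 : f₁ = -f₂ := by
      have hne : α ≠ ((f₂ : ℤ) : ℚ) := by
        intro h
        apply hden
        rw [h, Rat.den_intCast]
      have h1 : ((f₂ : ℤ) : ℚ) < α := lt_of_le_of_ne (Int.floor_le α) (Ne.symm hne)
      have h2 : α < (f₂ : ℚ) + 1 := Int.lt_floor_add_one α
      rw [hf₁def]
      rw [Int.floor_eq_iff]
      constructor
      · push_cast; linarith
      · push_cast; linarith
    set y : ℚ := ((n + f₁ : ℤ) : ℚ) / (b' : ℚ) + D with hydef
    have hyden : y.den ≠ 1 := by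
      intro h
      apply hDden
      apply den_eq_one_of_mul b' hb'pos D ((b' : ℤ) * y.num - (n + f₁)) ?_ hDcop
      have hyint : y = (y.num : ℚ) := (Rat.coe_int_num_of_den_eq_one h).symm
      have hD : D = y - ((n + f₁ : ℤ) : ℚ) / (b' : ℚ) := by rw [hydef]; ring
      rw [hD, hyint, Rat.num_intCast]
      push_cast
      field_simp
    have hyne : y ≠ ((⌊y⌋ : ℤ) : ℚ) := by
      intro h
      apply hyden
      rw [h, Rat.den_intCast]
    have hy1 : ((⌊y⌋ : ℤ) : ℚ) < y := lt_of_le_of_ne (Int.floor_le y) (Ne.symm hyne)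
    have hy2 : y < (⌊y⌋ : ℚ) + 1 := Int.lt_floor_add_one y
    have hX2 : X = -y := by rw [hXdef, hydef]; push_cast; ring
    have hY2 : Y = y - 1 := by
      rw [hYdef, hydef, hf12]
      push_cast
      ring
    have hfnegy : ⌊-y⌋ = -⌊y⌋ - 1 := by
      rw [Int.floor_eq_iff]
      constructor
      · push_cast; linarith
      · push_cast; linarith
    have hfY : ⌊Y⌋ = ⌊y⌋ - 1 := by
      rw [hY2, show y - 1 = y - ((1 : ℤ) : ℚ) by norm_num, Int.floor_sub_intCast]
    rw [hX2, hfnegy, hfY]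
    ring
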